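/- Let M ∈ {0,1}^{n×n} be an attention mask and P a permutation matrix with P M Pᵀ = M. Define masked attention f(E) = softmax_rows(M ⊙ (E W_Q)(E W_K)ᵀ + log(M)) (E W_V), where log(M) sets disallowed entries to -∞ (interpreted as: the softmax over each row is taken only over entries j with M_{ij} = 1). Then f(P E) = P f(E). -/

import Mathlib

open Matrix

/-- Row-wise softmax restricted, in row `i`, to the index set `S_i = {j | M i j = 1}`;
entries outside `S_i` receive weight `0` (this realizes adding `log M`, i.e. `-∞`
on disallowed entries). -/
noncomputable def maskedSoftmaxRows {n : ℕ} (M A : Matrix (Fin n) (Fin n) ℝ) :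
    Matrix (Fin n) (Fin n) ℝ :=
  fun i j =>
    if M i j = 1 then
      Real.exp (A i j) / ∑ k ∈ Finset.univ.filter (fun k => M i k = 1), Real.exp (A i k)
    else 0

/-- Masked self-attention
`f(E) = softmax_rows(M ⊙ (E W_Q)(E W_K)ᵀ + log M) (E W_V)`, where the softmax in
row `i` ranges only over `{j | M i j = 1}`. -/
noncomputable def maskedAttention {n d : ℕ} (M : Matrix (Fin n) (Fin n) ℝ)
    (WQ WK WV : Matrix (Fin d) (Fin d) ℝ) (E : Matrix (Fin n) (Fin d) ℝ) :
    Matrix (Fin n) (Fin d) ℝ :=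
  maskedSoftmaxRows M (fun i j => M i j * ((E * WQ) * (E * WK)ᵀ) i j) * (E * WV)

/-- Masked self-attention is equivariant to any permutation preserving the mask:
if `M` is a 0-1 mask with a `1` in every row and `P M Pᵀ = M` for a permutation
matrix `P`, then `f (P E) = P f(E)`. -/
theorem stmt_3 {n d : ℕ} (M : Matrix (Fin n) (Fin n) ℝ)
    (hM01 : ∀ i j, M i j = 0 ∨ M i j = 1)
    (hMrow : ∀ i, ∃ j, M i j = 1)
    (WQ WK WV : Matrix (Fin d) (Fin d) ℝ)
    (E : Matrix (Fin n) (Fin d) ℝ) (P : Matrix (Fin n) (Fin n) ℝ)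
    (hP : ∃ σ : Equiv.Perm (Fin n), P = σ.permMatrix ℝ)
    (hPM : P * M * Pᵀ = M) :
    maskedAttention M WQ WK WV (P * E) = P * maskedAttention M WQ WK WV E := by
  obtain ⟨σ, rfl⟩ := hP
  -- the mask is invariant: M (σ i) (σ j) = M i j
  have hM : ∀ i j, M (σ i) (σ j) = M i j := by
    intro i j
    have h1 : (σ.permMatrix ℝ) * M = M.submatrix σ id :=
      PEquiv.toMatrix_toPEquiv_mul σ M
    have h2 : (σ.permMatrix ℝ)ᵀ = σ.symm.toPEquiv.toMatrix := by
      rw [← PEquiv.toMatrix_symm, Equiv.toPEquiv_symm]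
    have h3 : M.submatrix σ id * σ.symm.toPEquiv.toMatrix
        = (M.submatrix σ id).submatrix id σ.symm.symm :=
      PEquiv.mul_toMatrix_toPEquiv _ σ.symm
    have := hPM
    rw [h1, h2, h3] at this
    have := congrFun (congrFun this i) j
    simpa using this
  have hPE : σ.permMatrix ℝ * E = E.submatrix σ id := PEquiv.toMatrix_toPEquiv_mul σ E
  rw [hPE]
  set B := (E * WQ) * (E * WK)ᵀ with hB
  set A := fun i j => M i j * B i j with hA
  set S := maskedSoftmaxRows M A with hS
  -- scores of the permuted input
  have hBperm : ∀ i j, (fun i j => M i j *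
      ((E.submatrix σ id * WQ) * (E.submatrix σ id * WK)ᵀ) i j) i j = A (σ i) (σ j) := by
    intro i j
    have hq : E.submatrix σ id * WQ = (E * WQ).submatrix σ id := by
      ext a b; simp [Matrix.mul_apply]
    have hk : E.submatrix σ id * WK = (E * WK).submatrix σ id := by
      ext a b; simp [Matrix.mul_apply]
    simp only [hq, hk, hA, hM]
    have : ((E * WQ).submatrix σ id * ((E * WK).submatrix σ id)ᵀ) i j = B (σ i) (σ j) := by
      simp [hB, Matrix.mul_apply, Matrix.transpose_apply]
    rw [this]
  have hBperm' : (fun i j => M i j *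
      ((E.submatrix σ id * WQ) * (E.submatrix σ id * WK)ᵀ) i j)
      = fun i j => A (σ i) (σ j) := by
    ext i j; exact hBperm i j
  -- softmax of the permuted scores
  have hSperm : maskedSoftmaxRows M (fun i j => A (σ i) (σ j))
      = fun i j => S (σ i) (σ j) := by
    ext i j
    simp only [maskedSoftmaxRows, hS, hM]
    by_cases h : M i j = 1
    · rw [if_pos h, if_pos h]
      congr 1
      rw [Finset.sum_filter, Finset.sum_filter]
      exact Fintype.sum_equiv σ _ _ (fun k => by rw [hM])
    · rw [if_neg h, if_neg h]
  have hv : E.submatrix σ id * WV = (E * WV).submatrix σ id := by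
    ext a b; simp [Matrix.mul_apply]
  unfold maskedAttention
  rw [hBperm', hSperm, hv, PEquiv.toMatrix_toPEquiv_mul]
  ext i j
  simp only [Matrix.mul_apply, Matrix.submatrix_apply, id]
  exact Fintype.sum_equiv σ _ _ (fun k => rfl)
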